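/- (Optimality criterion) Let (Z(S))_{S∈S^Λ} be a nonnegative S^Λ-system of class(D^Λ) and let Z̄ be its Λ-Snell envelope. A Λ-stopping time Ū maximizes E[Z(S)] over all S ∈ S^Λ if and only if: (i) Z(Ū) = Z̄_Ū P-a.s., and (ii) the stopped process (Z̄_{t∧Ū})_{t∈[0,∞]} is a Λ-martingale. -/

import Mathlib

open MeasureTheory Filter Set Topology
open scoped NNReal ENNReal symmDiff Classical

noncomputable section

namespace Meyer

variable {Ω : Type*}

/-- The σ-field generated by a family of real-valued functions. -/
def genBy {α : Type*} (C : Set (α → ℝ)) : MeasurableSpace α :=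
  ⨆ f ∈ C, MeasurableSpace.comap f inferInstance

/-- A function is càdlàg: right-continuous with left limits. -/
def IsCadlag (f : ℝ≥0 → ℝ) : Prop :=
  (∀ t, Tendsto f (𝓝[≥] t) (𝓝 (f t))) ∧
  ∀ t : ℝ≥0, 0 < t → ∃ l, Tendsto f (𝓝[<] t) (𝓝 l)

/-- A Meyer-σ-field over `(Ω, mΩ)`: a σ-field on `Ω × [0,∞)` contained in the product
σ-field, generated by càdlàg processes, containing `{∅,Ω} × B([0,∞))` and stable under
stopping at deterministic times. -/
structure IsMeyer (mΩ : MeasurableSpace Ω) (Λ : MeasurableSpace (Ω × ℝ≥0)) : Prop where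
  le_prod : Λ ≤ @Prod.instMeasurableSpace Ω ℝ≥0 mΩ inferInstance
  gen_cadlag : ∃ C : Set (Ω × ℝ≥0 → ℝ),
    (∀ Z ∈ C, ∀ ω, IsCadlag fun t => Z (ω, t)) ∧ Λ = genBy C
  contains_borel : ∀ B : Set ℝ≥0, MeasurableSet B → MeasurableSet[Λ] (Set.univ ×ˢ B)
  stop_stable : ∀ Z : Ω × ℝ≥0 → ℝ, Measurable[Λ] Z → ∀ s : ℝ≥0,
    Measurable[Λ] fun p => Z (p.1, min p.2 s)

/-- A `Λ`-stopping time: `[[S,∞[[ ∈ Λ`. -/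
def IsStoppingTimeM (Λ : MeasurableSpace (Ω × ℝ≥0)) (S : Ω → ℝ≥0∞) : Prop :=
  MeasurableSet[Λ] {p : Ω × ℝ≥0 | S p.1 ≤ (p.2 : ℝ≥0∞)}

/-- The associated filtration `F^Λ_t := σ(Z_t : Z Λ-measurable)`. -/
def sigmaAt (Λ : MeasurableSpace (Ω × ℝ≥0)) (t : ℝ≥0) : MeasurableSpace Ω :=
  genBy {f : Ω → ℝ | ∃ Z : Ω × ℝ≥0 → ℝ, Measurable[Λ] Z ∧ f = fun ω => Z (ω, t)}

/-- `F^Λ_∞`. -/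
def sigmaInf (Λ : MeasurableSpace (Ω × ℝ≥0)) : MeasurableSpace Ω := ⨆ t : ℝ≥0, sigmaAt Λ t

/-- A process indexed by `[0,∞]` is `Λ`-measurable if its restriction to `Ω × [0,∞)`
is `Λ`-measurable and its value at `∞` is `F^Λ_∞`-measurable. -/
def MeasurableProcessE (Λ : MeasurableSpace (Ω × ℝ≥0)) (Z : Ω × ℝ≥0∞ → ℝ) : Prop :=
  Measurable[Λ] (fun p : Ω × ℝ≥0 => Z (p.1, (p.2 : ℝ≥0∞))) ∧
  Measurable[sigmaInf Λ] fun ω => Z (ω, ∞)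

/-- `F^Λ_S := σ(Z_S : Z a Λ-measurable process on [0,∞])`. -/
def sigmaAtTime (Λ : MeasurableSpace (Ω × ℝ≥0)) (S : Ω → ℝ≥0∞) : MeasurableSpace Ω :=
  genBy {f : Ω → ℝ | ∃ Z : Ω × ℝ≥0∞ → ℝ, MeasurableProcessE Λ Z ∧ f = fun ω => Z (ω, S ω)}

/-- `S_A`: equal to `S` on `A` and `∞` off `A`. -/
def restrictST (S : Ω → ℝ≥0∞) (A : Set Ω) : Ω → ℝ≥0∞ := fun ω => if ω ∈ A then S ω else ∞

/-- Evaluation of a process indexed by `[0,∞]` at a random time. -/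
def EvalAt (Z : Ω × ℝ≥0∞ → ℝ) (S : Ω → ℝ≥0∞) : Ω → ℝ := fun ω => Z (ω, S ω)

/-- Evaluation of a process indexed by `[0,∞)` at a (finite) random time. -/
def EvalAtF (Z : Ω × ℝ≥0 → ℝ) (S : Ω → ℝ≥0∞) : Ω → ℝ := fun ω => Z (ω, (S ω).toNNReal)

/-- Adaptedness of a process to a raw filtration. -/
def Adapted' (G : ℝ≥0 → MeasurableSpace Ω) (Z : Ω × ℝ≥0 → ℝ) : Prop :=
  ∀ t, Measurable[G t] fun ω => Z (ω, t)

/-- Predictable σ-field of a filtration: generated by continuous adapted processes. -/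
def predSF (G : ℝ≥0 → MeasurableSpace Ω) : MeasurableSpace (Ω × ℝ≥0) :=
  genBy {Z | (∀ ω, Continuous fun t => Z (ω, t)) ∧ Adapted' G Z}

/-- Optional σ-field of a filtration: generated by càdlàg adapted processes. -/
def optSF (G : ℝ≥0 → MeasurableSpace Ω) : MeasurableSpace (Ω × ℝ≥0) :=
  genBy {Z | (∀ ω, IsCadlag fun t => Z (ω, t)) ∧ Adapted' G Z}

/-- Classical stopping time of a raw filtration. -/
def IsStoppingTimeCl (G : ℝ≥0 → MeasurableSpace Ω) (T : Ω → ℝ≥0∞) : Prop :=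
  ∀ t : ℝ≥0, MeasurableSet[G t] {ω | T ω ≤ (t : ℝ≥0∞)}

/-- The right-continuous filtration `F^Λ_{t+}`. -/
def FplusLambda (Λ : MeasurableSpace (Ω × ℝ≥0)) (t : ℝ≥0) : MeasurableSpace Ω :=
  ⨅ (s : ℝ≥0) (_ : t < s), sigmaAt Λ s

/-- Two processes are indistinguishable. -/
def Indistinguishable {τ : Type*} [MeasurableSpace Ω] (P : Measure Ω)
    (X Y : Ω × τ → ℝ) : Prop :=
  P {ω | ∃ t, X (ω, t) ≠ Y (ω, t)} = 0

/-- `Λ` is `P`-complete: every product-measurable process indistinguishable from a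
`Λ`-measurable process is itself `Λ`-measurable. -/
def IsPCompleteM [mΩ : MeasurableSpace Ω] (P : Measure Ω)
    (Λ : MeasurableSpace (Ω × ℝ≥0)) : Prop :=
  ∀ Z Z' : Ω × ℝ≥0 → ℝ, Measurable Z → Measurable[Λ] Z' →
    Indistinguishable P Z Z' → Measurable[Λ] Z

/-- A raw filtration satisfies the usual conditions: monotone, sub-σ-fields of `mΩ`,
right-continuous and `P`-complete. -/
def UsualConditions [mΩ : MeasurableSpace Ω] (P : Measure Ω)
    (G : ℝ≥0 → MeasurableSpace Ω) : Prop :=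
  Monotone G ∧ (∀ t, G t ≤ mΩ) ∧
  (∀ t : ℝ≥0, G t = ⨅ (s : ℝ≥0) (_ : t < s), G s) ∧
  ∀ N : Set Ω, MeasurableSet N → P N = 0 → MeasurableSet[G 0] N

variable [mΩ : MeasurableSpace Ω]

/-- `Λ`-martingale (indexed by `[0,∞]`). -/
def IsMartingaleM (P : Measure Ω) (Λ : MeasurableSpace (Ω × ℝ≥0))
    (Z : Ω × ℝ≥0∞ → ℝ) : Prop :=
  MeasurableProcessE Λ Z ∧
  (∀ S, IsStoppingTimeM Λ S → Integrable (EvalAt Z S) P) ∧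
  ∀ S T : Ω → ℝ≥0∞, IsStoppingTimeM Λ S → IsStoppingTimeM Λ T → S ≤ T →
    EvalAt Z S =ᵐ[P] P[EvalAt Z T|sigmaAtTime Λ S]

/-- `Λ`-supermartingale (indexed by `[0,∞]`). -/
def IsSupermartingaleM (P : Measure Ω) (Λ : MeasurableSpace (Ω × ℝ≥0))
    (Z : Ω × ℝ≥0∞ → ℝ) : Prop :=
  MeasurableProcessE Λ Z ∧
  (∀ S, IsStoppingTimeM Λ S → Integrable (EvalAt Z S) P) ∧
  ∀ S T : Ω → ℝ≥0∞, IsStoppingTimeM Λ S → IsStoppingTimeM Λ T → S ≤ T →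
    P[EvalAt Z T|sigmaAtTime Λ S] ≤ᵐ[P] EvalAt Z S

/-- Class `(D^Λ)` for a process: uniform integrability of `{Z_T : T ∈ S^Λ}`. -/
def ClassD (P : Measure Ω) (Λ : MeasurableSpace (Ω × ℝ≥0)) (Z : Ω × ℝ≥0∞ → ℝ) : Prop :=
  UniformIntegrable (fun S : {S : Ω → ℝ≥0∞ // IsStoppingTimeM Λ S} => EvalAt Z S.1) 1 P

/-- Class `(D^Λ)` for a system. -/
def ClassDSys (P : Measure Ω) (Λ : MeasurableSpace (Ω × ℝ≥0))
    (ZS : (Ω → ℝ≥0∞) → Ω → ℝ) : Prop :=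
  UniformIntegrable (fun S : {S : Ω → ℝ≥0∞ // IsStoppingTimeM Λ S} => ZS S.1) 1 P

/-- `pY` is a `Λ`-projection of `Y` (processes indexed by `[0,∞]`). -/
def IsProjectionE (P : Measure Ω) (Λ : MeasurableSpace (Ω × ℝ≥0))
    (Y pY : Ω × ℝ≥0∞ → ℝ) : Prop :=
  MeasurableProcessE Λ pY ∧
  ∀ S, IsStoppingTimeM Λ S → (∀ ω, S ω < ∞) →
    EvalAt pY S =ᵐ[P] P[EvalAt Y S|sigmaAtTime Λ S]

/-- `pY` is a `Λ`-projection of `Y` (processes indexed by `[0,∞)`). -/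
def IsProjectionF (P : Measure Ω) (Λ : MeasurableSpace (Ω × ℝ≥0))
    (Y pY : Ω × ℝ≥0 → ℝ) : Prop :=
  Measurable[Λ] pY ∧
  ∀ S, IsStoppingTimeM Λ S → (∀ ω, S ω < ∞) →
    EvalAtF pY S =ᵐ[P] P[EvalAtF Y S|sigmaAtTime Λ S]

/-- Right-upper-semicontinuous envelope `Z^*` (with `Z^*_∞ := Z_∞`). -/
def rightLimsup (Z : Ω × ℝ≥0∞ → ℝ) (ω : Ω) (t : ℝ≥0∞) : ℝ :=
  if t = ∞ then Z (ω, ∞)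
  else limsup (fun s : ℝ≥0 => Z (ω, (s : ℝ≥0∞))) (𝓝[>] t.toNNReal)

/-- Right-lower-semicontinuous envelope `Z_*` (with `Z_{∞*} := Z_∞`). -/
def rightLiminf (Z : Ω × ℝ≥0∞ → ℝ) (ω : Ω) (t : ℝ≥0∞) : ℝ :=
  if t = ∞ then Z (ω, ∞)
  else liminf (fun s : ℝ≥0 => Z (ω, (s : ℝ≥0∞))) (𝓝[>] t.toNNReal)

/-- Left-upper-semicontinuous envelope `*Z` (with `*Z_0 := Z_0` and
`*Z_∞ := limsup_{t↑∞} Z_t`). -/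
def leftLimsup (Z : Ω × ℝ≥0∞ → ℝ) (ω : Ω) (t : ℝ≥0∞) : ℝ :=
  if t = 0 then Z (ω, 0)
  else if t = ∞ then limsup (fun s : ℝ≥0 => Z (ω, (s : ℝ≥0∞))) atTop
  else limsup (fun s : ℝ≥0 => Z (ω, (s : ℝ≥0∞))) (𝓝[<] t.toNNReal)

/-- Left-lower-semicontinuous envelope `_*Z`. -/
def leftLiminf (Z : Ω × ℝ≥0∞ → ℝ) (ω : Ω) (t : ℝ≥0∞) : ℝ :=
  if t = 0 then Z (ω, 0)
  else if t = ∞ then liminf (fun s : ℝ≥0 => Z (ω, (s : ℝ≥0∞))) atTop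
  else liminf (fun s : ℝ≥0 => Z (ω, (s : ℝ≥0∞))) (𝓝[<] t.toNNReal)

/-- `T` is `Λ`-accessible. -/
def IsAccessibleM [mΩ2 : MeasurableSpace Ω] (P : Measure Ω)
    (Λ : MeasurableSpace (Ω × ℝ≥0)) (T : Ω → ℝ≥0∞) : Prop :=
  ∃ Tn : ℕ → Ω → ℝ≥0∞, (∀ n, IsStoppingTimeM Λ (Tn n)) ∧
    P (⋃ n, {ω | Tn n ω = T ω ∧ T ω < ∞}) = P {ω | T ω < ∞}

/-- `T` is totally `Λ`-inaccessible. -/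
def IsTotallyInaccessibleM [mΩ2 : MeasurableSpace Ω] (P : Measure Ω)
    (Λ : MeasurableSpace (Ω × ℝ≥0)) (T : Ω → ℝ≥0∞) : Prop :=
  ∀ S, IsStoppingTimeM Λ S → P {ω | S ω = T ω ∧ T ω < ∞} = 0

/-- The σ-field `G_{T-}`: generated by `G_0` and the sets `A ∩ {t < T}`, `A ∈ G_t`. -/
def sigmaPre (G : ℝ≥0 → MeasurableSpace Ω) (T : Ω → ℝ≥0∞) : MeasurableSpace Ω :=
  MeasurableSpace.generateFrom
    ({A | MeasurableSet[G 0] A} ∪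
      {A | ∃ (t : ℝ≥0) (B : Set Ω), MeasurableSet[G t] B ∧ A = B ∩ {ω | (t : ℝ≥0∞) < T ω}})

/-- The σ-field `G_T` of a classical stopping time `T`. -/
def sigmaAtCl (G : ℝ≥0 → MeasurableSpace Ω) (T : Ω → ℝ≥0∞) : MeasurableSpace Ω :=
  MeasurableSpace.generateFrom
    {A | ∀ t : ℝ≥0, MeasurableSet[G t] (A ∩ {ω | T ω ≤ (t : ℝ≥0∞)})}

/-- A divided stopping time `σ = (T, W⁻, W, W⁺)`. -/
structure IsDividedST (Λ : MeasurableSpace (Ω × ℝ≥0)) (T : Ω → ℝ≥0∞)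
    (Wm W Wp : Set Ω) : Prop where
  stopping : IsStoppingTimeCl (FplusLambda Λ) T
  cover : Wm ∪ W ∪ Wp = Set.univ
  disj_mw : Wm ∩ W = ∅
  disj_mp : Wm ∩ Wp = ∅
  disj_wp : W ∩ Wp = ∅
  mem_m : MeasurableSet[sigmaPre (FplusLambda Λ) T] Wm
  m_pos : Wm ∩ {ω | T ω = 0} = ∅
  mem_w : MeasurableSet[sigmaAtTime Λ T] W
  mem_p : MeasurableSet[sigmaAtCl (FplusLambda Λ) T] Wp
  p_fin : Wp ∩ {ω | T ω = ∞} = ∅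
  pred_m : IsStoppingTimeM (predSF (FplusLambda Λ)) (restrictST T Wm)
  st_w : IsStoppingTimeM Λ (restrictST T W)

/-- The value `Z_σ` of a process at a divided stopping time. -/
def divEval (Z : Ω × ℝ≥0∞ → ℝ) (T : Ω → ℝ≥0∞) (Wm W Wp : Set Ω) : Ω → ℝ := fun ω =>
  if ω ∈ Wm then leftLimsup Z ω (T ω)
  else if ω ∈ W then Z (ω, T ω)
  else rightLimsup Z ω (T ω)

/-- `Zb` is the `Λ`-Snell envelope of the system `ZS`: a `Λ`-supermartingale which at
each `Λ`-stopping time `S` is (a version of) `ess sup_{T ∈ S^Λ, T ≥ S} E[Z(T) | F^Λ_S]`. -/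
def IsSnellSys (P : Measure Ω) (Λ : MeasurableSpace (Ω × ℝ≥0))
    (ZS : (Ω → ℝ≥0∞) → Ω → ℝ) (Zb : Ω × ℝ≥0∞ → ℝ) : Prop :=
  IsSupermartingaleM P Λ Zb ∧
  ∀ S, IsStoppingTimeM Λ S →
    (∀ T, IsStoppingTimeM Λ T → S ≤ T →
      P[ZS T|sigmaAtTime Λ S] ≤ᵐ[P] EvalAt Zb S) ∧
    ∀ U : Ω → ℝ,
      (∀ T, IsStoppingTimeM Λ T → S ≤ T → P[ZS T|sigmaAtTime Λ S] ≤ᵐ[P] U) →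
      EvalAt Zb S ≤ᵐ[P] U

/-- `Zb` is the `Λ`-Snell envelope of the process `Z`. -/
def IsSnellProc (P : Measure Ω) (Λ : MeasurableSpace (Ω × ℝ≥0))
    (Z Zb : Ω × ℝ≥0∞ → ℝ) : Prop :=
  IsSnellSys P Λ (fun S => EvalAt Z S) Zb

/-- An `S^Λ`-system. -/
def IsSystemM (P : Measure Ω) (Λ : MeasurableSpace (Ω × ℝ≥0))
    (ZS : (Ω → ℝ≥0∞) → Ω → ℝ) : Prop :=
  (∀ S T, IsStoppingTimeM Λ S → IsStoppingTimeM Λ T →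
    ∀ᵐ ω ∂P, S ω = T ω → ZS S ω = ZS T ω) ∧
  ∀ S, IsStoppingTimeM Λ S → Measurable[sigmaAtTime Λ S] (ZS S)

/-- An `S^Λ`-supermartingale system. -/
def IsSupermartingaleSystem (P : Measure Ω) (Λ : MeasurableSpace (Ω × ℝ≥0))
    (ZS : (Ω → ℝ≥0∞) → Ω → ℝ) : Prop :=
  IsSystemM P Λ ZS ∧ (∀ S, IsStoppingTimeM Λ S → Integrable (ZS S) P) ∧
  ∀ S T, IsStoppingTimeM Λ S → IsStoppingTimeM Λ T → S ≤ T →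
    P[ZS T|sigmaAtTime Λ S] ≤ᵐ[P] ZS S

/-- The process `Zb` aggregates the system `ZS`. -/
def Aggregates (P : Measure Ω) (Λ : MeasurableSpace (Ω × ℝ≥0))
    (Zb : Ω × ℝ≥0∞ → ℝ) (ZS : (Ω → ℝ≥0∞) → Ω → ℝ) : Prop :=
  ∀ S, IsStoppingTimeM Λ S → EvalAt Zb S =ᵐ[P] ZS S

/-- `pY` is the `F`-predictable projection of `Y` (with the convention `(^P Y)_∞ = 0`). -/
def IsPredProjE (P : Measure Ω) (G : ℝ≥0 → MeasurableSpace Ω)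
    (Y pY : Ω × ℝ≥0∞ → ℝ) : Prop :=
  MeasurableProcessE (predSF G) pY ∧ (∀ ω, pY (ω, ∞) = 0) ∧
  ∀ S, IsStoppingTimeM (predSF G) S → (∀ ω, S ω < ∞) →
    EvalAt pY S =ᵐ[P] P[EvalAt Y S|sigmaAtTime (predSF G) S]
open MeasureTheory Filter Set Topology
open scoped NNReal ENNReal Classical

/-! ### genBy basics -/

lemma measurable_genBy_of {α β : Type*} {m : MeasurableSpace α} {C : Set (β → ℝ)}
    {g : α → β} (h : ∀ f ∈ C, Measurable[m] (f ∘ g)) :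
    @Measurable α β m (genBy C) g := by
  rw [measurable_iff_comap_le, genBy, MeasurableSpace.comap_iSup]
  refine iSup_le fun f => ?_
  rw [MeasurableSpace.comap_iSup]
  refine iSup_le fun hf => ?_
  rw [MeasurableSpace.comap_comp]
  exact measurable_iff_comap_le.1 (h f hf)

lemma measurable_genBy_self {α : Type*} {C : Set (α → ℝ)} {f : α → ℝ} (hf : f ∈ C) :
    Measurable[genBy C] f := by
  rw [measurable_iff_comap_le, genBy]
  exact le_iSup₂ (f := fun f _ => MeasurableSpace.comap f inferInstance) f hf

lemma genBy_le {α : Type*} {C : Set (α → ℝ)} {m : MeasurableSpace α}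
    (h : ∀ f ∈ C, Measurable[m] f) : genBy C ≤ m :=
  iSup₂_le fun f hf => measurable_iff_comap_le.1 (h f hf)

variable {Λ : MeasurableSpace (Ω × ℝ≥0)}

local notation "mProd" => @Prod.instMeasurableSpace Ω ℝ≥0 _ inferInstance

lemma measurable_limit_of {α : Type*} (m : MeasurableSpace α) {f : ℕ → α → ℝ} {g : α → ℝ}
    (hf : ∀ n, Measurable[m] (f n)) (h : ∀ x, Tendsto (fun n => f n x) atTop (𝓝 (g x))) :
    Measurable[m] g := by
  letI := m
  exact measurable_of_tendsto_metrizable' atTop hf (tendsto_pi_nhds.2 h)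

/-! ### Stopping time basics -/

lemma isST_zero : IsStoppingTimeM Λ (fun _ => (0:ℝ≥0∞)) := by
  have : {p : Ω × ℝ≥0 | (0:ℝ≥0∞) ≤ (p.2:ℝ≥0∞)} = Set.univ := by
    ext p; simp
  unfold IsStoppingTimeM
  rw [this]; exact MeasurableSet.univ

lemma isST_top : IsStoppingTimeM Λ (fun _ => (⊤:ℝ≥0∞)) := by
  have : {p : Ω × ℝ≥0 | (⊤:ℝ≥0∞) ≤ (p.2:ℝ≥0∞)} = (∅ : Set (Ω × ℝ≥0)) := by
    ext p; simp [top_le_iff, ENNReal.coe_ne_top]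
  unfold IsStoppingTimeM
  rw [this]; exact MeasurableSet.empty

lemma isST_min {S T : Ω → ℝ≥0∞} (hS : IsStoppingTimeM Λ S) (hT : IsStoppingTimeM Λ T) :
    IsStoppingTimeM Λ (fun ω => min (S ω) (T ω)) := by
  have : {p : Ω × ℝ≥0 | min (S p.1) (T p.1) ≤ (p.2:ℝ≥0∞)}
      = {p : Ω × ℝ≥0 | S p.1 ≤ (p.2:ℝ≥0∞)} ∪ {p : Ω × ℝ≥0 | T p.1 ≤ (p.2:ℝ≥0∞)} := by
    ext p; simp [min_le_iff]
  unfold IsStoppingTimeM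
  rw [this]; exact hS.union hT

lemma measurable_of_isST [mΩ : MeasurableSpace Ω] (hΛ : IsMeyer mΩ Λ) {S : Ω → ℝ≥0∞}
    (hS : IsStoppingTimeM Λ S) : Measurable S := by
  have hsec : ∀ t : ℝ≥0, MeasurableSet {ω | S ω ≤ (t:ℝ≥0∞)} := by
    intro t
    have h1 : MeasurableSet[@Prod.instMeasurableSpace Ω ℝ≥0 mΩ inferInstance]
        {p : Ω × ℝ≥0 | S p.1 ≤ (p.2:ℝ≥0∞)} := hΛ.le_prod _ hS
    have h2 : @Measurable Ω (Ω × ℝ≥0) mΩ (@Prod.instMeasurableSpace Ω ℝ≥0 mΩ inferInstance)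
        (fun ω : Ω => (ω, t)) := measurable_id.prodMk measurable_const
    exact h2 h1
  refine measurable_of_Iic fun a => ?_
  rcases eq_or_ne a ∞ with rfl | ha
  · simp
  · have : S ⁻¹' Set.Iic a = ⋂ (q : ℚ) (_ : a < ((q:ℝ).toNNReal : ℝ≥0∞)),
        {ω | S ω ≤ (((q:ℝ).toNNReal : ℝ≥0) : ℝ≥0∞)} := by
      ext ω
      simp only [Set.mem_preimage, Set.mem_Iic, Set.mem_iInter, Set.mem_setOf_eq]
      constructor
      · intro h q hq; exact h.trans hq.le
      · intro h
        by_contra hc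
        rw [not_le] at hc
        obtain ⟨q, hq0, h1, h2⟩ := ENNReal.lt_iff_exists_rat_btwn.1 hc
        exact absurd (h q h1) (not_le.2 h2)
    rw [this]
    exact MeasurableSet.iInter fun q => MeasurableSet.iInter fun _ => hsec _


/-! ### σ-field comparisons -/

lemma measurable_prod_of_lambda (hΛ : IsMeyer mΩ Λ) {Z : Ω × ℝ≥0 → ℝ}
    (hZ : Measurable[Λ] Z) : Measurable[mProd] Z :=
  fun _ hs => hΛ.le_prod _ (hZ hs)

lemma sigmaAt_le (hΛ : IsMeyer mΩ Λ) (t : ℝ≥0) : sigmaAt Λ t ≤ mΩ := by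
  refine genBy_le fun f hf => ?_
  obtain ⟨Z, hZ, rfl⟩ := hf
  exact (measurable_prod_of_lambda hΛ hZ).comp (measurable_id.prodMk measurable_const)

lemma sigmaInf_le (hΛ : IsMeyer mΩ Λ) : sigmaInf Λ ≤ mΩ :=
  iSup_le fun t => sigmaAt_le hΛ t

lemma measurable_evalAt_of_processE (hΛ : IsMeyer mΩ Λ) {Z : Ω × ℝ≥0∞ → ℝ}
    (hZ : MeasurableProcessE Λ Z) {S : Ω → ℝ≥0∞} (hS : IsStoppingTimeM Λ S) :
    Measurable (EvalAt Z S) := by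
  have hSm : Measurable S := measurable_of_isST hΛ hS
  have hZr : Measurable[mProd] (fun p : Ω × ℝ≥0 => Z (p.1, (p.2:ℝ≥0∞))) :=
    measurable_prod_of_lambda hΛ hZ.1
  have hZi : Measurable (fun ω => Z (ω, ∞)) := (hZ.2).mono (sigmaInf_le hΛ) le_rfl
  have h2 : @Measurable Ω (Ω × ℝ≥0) mΩ mProd (fun ω => (ω, (S ω).toNNReal)) :=
    measurable_id.prodMk hSm.ennreal_toNNReal
  have heq : EvalAt Z S = fun ω =>
      if S ω = ∞ then Z (ω, ∞) else Z (ω, (((S ω).toNNReal : ℝ≥0) : ℝ≥0∞)) := by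
    funext ω
    by_cases h : S ω = ∞
    · simp [EvalAt, h]
    · simp [EvalAt, h, ENNReal.coe_toNNReal h]
  rw [heq]
  exact Measurable.ite (hSm (measurableSet_singleton ∞)) hZi (hZr.comp h2)

lemma sigmaAtTime_le (hΛ : IsMeyer mΩ Λ) {S : Ω → ℝ≥0∞} (hS : IsStoppingTimeM Λ S) :
    sigmaAtTime Λ S ≤ mΩ := by
  refine genBy_le fun f hf => ?_
  obtain ⟨Z, hZ, rfl⟩ := hf
  exact measurable_evalAt_of_processE hΛ hZ hS

lemma measurable_evalAt_sigmaAtTime {Z : Ω × ℝ≥0∞ → ℝ}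
    (hZ : MeasurableProcessE Λ Z) (S : Ω → ℝ≥0∞) :
    Measurable[sigmaAtTime Λ S] (EvalAt Z S) :=
  measurable_genBy_self ⟨Z, hZ, rfl⟩

/-! ### The set `{S ≤ s} ∩ {s ≤ t}` is in Λ -/

lemma memΛ_B (hΛ : IsMeyer mΩ Λ) {S : Ω → ℝ≥0∞} (hS : IsStoppingTimeM Λ S) (s : ℝ≥0) :
    MeasurableSet[Λ] {p : Ω × ℝ≥0 | S p.1 ≤ (s : ℝ≥0∞) ∧ s ≤ p.2} := by
  set I : Ω × ℝ≥0 → ℝ := Set.indicator {p : Ω × ℝ≥0 | S p.1 ≤ (p.2:ℝ≥0∞)} 1 with hI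
  have hIval : ∀ x : Ω × ℝ≥0, I x = if S x.1 ≤ (x.2:ℝ≥0∞) then 1 else 0 := by
    intro x
    rw [hI, Set.indicator_apply]
    simp only [Set.mem_setOf_eq, Pi.one_apply]
  have hIm : Measurable[Λ] I := measurable_one.indicator hS
  have hJm : Measurable[Λ] (fun p : Ω × ℝ≥0 => I (p.1, min p.2 s)) :=
    hΛ.stop_stable I hIm s
  have hset : {p : Ω × ℝ≥0 | S p.1 ≤ (s : ℝ≥0∞) ∧ s ≤ p.2}
      = (fun p : Ω × ℝ≥0 => I (p.1, min p.2 s)) ⁻¹' {1} ∩ (Set.univ ×ˢ Set.Ici s) := by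
    ext p
    simp only [Set.mem_setOf_eq, Set.mem_inter_iff, Set.mem_preimage, Set.mem_singleton_iff,
      Set.mem_prod, Set.mem_univ, true_and, Set.mem_Ici, hIval]
    constructor
    · rintro ⟨h1, h2⟩
      rw [min_eq_right h2]
      exact ⟨if_pos h1, h2⟩
    · rintro ⟨h1, h2⟩
      rw [min_eq_right h2] at h1
      refine ⟨?_, h2⟩
      by_contra hc
      rw [if_neg hc] at h1
      exact one_ne_zero h1.symm
  rw [hset]
  exact (hJm (measurableSet_singleton 1)).inter (hΛ.contains_borel _ measurableSet_Ici)

/-! ### The key stopping lemma -/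

/-- The process `W` stopped at the random time `S` (on `Ω × [0,∞)`). -/
def stoppedF (W : Ω × ℝ≥0 → ℝ) (S : Ω → ℝ≥0∞) : Ω × ℝ≥0 → ℝ :=
  fun p => if S p.1 ≤ (p.2:ℝ≥0∞) then W (p.1, (S p.1).toNNReal) else W p

/-- dyadic value `k / 2 ^ n`. -/
def cval (n k : ℕ) : ℝ≥0 := (k : ℝ≥0) / 2 ^ n

/-- dyadic upper approximation index of `S`. -/
def knat (S : Ω → ℝ≥0∞) (n : ℕ) (ω : Ω) : ℕ := ⌈(S ω).toNNReal * 2 ^ n⌉₊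

lemma two_pow_ne_zero' (n : ℕ) : ((2:ℝ≥0) ^ n) ≠ 0 := pow_ne_zero n (by norm_num)

lemma cval_mono (n : ℕ) {k j : ℕ} (h : k ≤ j) : cval n k ≤ cval n j := by
  rw [cval, cval]
  gcongr <;> exact_mod_cast h

lemma le_cval_iff {S : Ω → ℝ≥0∞} {ω : Ω} (hS : S ω ≠ ∞) (n k : ℕ) :
    S ω ≤ ((cval n k : ℝ≥0) : ℝ≥0∞) ↔ knat S n ω ≤ k := by
  rw [← ENNReal.coe_toNNReal hS, ENNReal.coe_le_coe, cval,
    le_div_iff₀ (pow_pos (by norm_num) n), knat]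
  exact (Nat.ceil_le).symm

lemma self_le_cval_knat {S : Ω → ℝ≥0∞} {ω : Ω} (hS : S ω ≠ ∞) (n : ℕ) :
    S ω ≤ ((cval n (knat S n ω) : ℝ≥0) : ℝ≥0∞) :=
  (le_cval_iff hS n _).2 le_rfl

lemma cval_knat_le {S : Ω → ℝ≥0∞} {ω : Ω} (hS : S ω ≠ ∞) (n : ℕ) :
    cval n (knat S n ω) ≤ (S ω).toNNReal + ((2:ℝ≥0) ^ n)⁻¹ := by
  rw [cval, div_le_iff₀ (pow_pos (by norm_num) n), knat]
  have h := Nat.ceil_lt_add_one (zero_le : (0:ℝ≥0) ≤ (S ω).toNNReal * 2 ^ n)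
  calc (⌈(S ω).toNNReal * 2 ^ n⌉₊ : ℝ≥0) ≤ (S ω).toNNReal * 2 ^ n + 1 := h.le
  _ = ((S ω).toNNReal + ((2:ℝ≥0) ^ n)⁻¹) * 2 ^ n := by
      rw [add_mul, inv_mul_cancel₀ (two_pow_ne_zero' n)]

/-- The graded pieces `{S ≠ ∞, knat = k, cval n k ≤ t}`. -/
def Epiece (S : Ω → ℝ≥0∞) (n k : ℕ) : Set (Ω × ℝ≥0) :=
  {p | S p.1 ≠ ∞ ∧ knat S n p.1 = k ∧ cval n k ≤ p.2}

lemma measurableSet_Epiece (hΛ : IsMeyer mΩ Λ) {S : Ω → ℝ≥0∞}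
    (hS : IsStoppingTimeM Λ S) (n k : ℕ) : MeasurableSet[Λ] (Epiece S n k) := by
  have hfin : ∀ p : Ω × ℝ≥0, ∀ j, S p.1 ≤ ((cval n j : ℝ≥0) : ℝ≥0∞) → S p.1 ≠ ∞ :=
    fun p j h => ne_top_of_le_ne_top ENNReal.coe_ne_top h
  rcases k with _ | k
  · have : Epiece S n 0 =
        {p : Ω × ℝ≥0 | S p.1 ≤ ((cval n 0 : ℝ≥0) : ℝ≥0∞) ∧ cval n 0 ≤ p.2} := by
      ext p
      simp only [Epiece, Set.mem_setOf_eq]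
      constructor
      · rintro ⟨h1, h2, h3⟩
        exact ⟨(le_cval_iff h1 n 0).2 h2.le, h3⟩
      · rintro ⟨h1, h2⟩
        have h1' := hfin p 0 h1
        exact ⟨h1', Nat.le_zero.1 ((le_cval_iff h1' n 0).1 h1), h2⟩
    rw [this]; exact memΛ_B hΛ hS _
  · have : Epiece S n (k+1) =
        {p : Ω × ℝ≥0 | S p.1 ≤ ((cval n (k+1) : ℝ≥0) : ℝ≥0∞) ∧ cval n (k+1) ≤ p.2} \
        ({p : Ω × ℝ≥0 | S p.1 ≤ ((cval n k : ℝ≥0) : ℝ≥0∞) ∧ cval n k ≤ p.2} ∩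
          (Set.univ ×ˢ Set.Ici (cval n (k+1)))) := by
      ext p
      simp only [Epiece, Set.mem_setOf_eq, Set.mem_diff, Set.mem_inter_iff, Set.mem_prod,
        Set.mem_univ, true_and, Set.mem_Ici]
      constructor
      · rintro ⟨h1, h2, h3⟩
        refine ⟨⟨(le_cval_iff h1 n (k+1)).2 h2.le, h3⟩, ?_⟩
        rintro ⟨⟨ha, _⟩, _⟩
        have := (le_cval_iff h1 n k).1 ha
        omega
      · rintro ⟨⟨h1, h2⟩, h3⟩
        have h1' := hfin p (k+1) h1
        have hle := (le_cval_iff h1' n (k+1)).1 h1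
        refine ⟨h1', ?_, h2⟩
        by_contra hc
        have hk : knat S n p.1 ≤ k := by omega
        exact h3 ⟨⟨(le_cval_iff h1' n k).2 hk, (cval_mono n (Nat.le_succ k)).trans h2⟩, h2⟩
    rw [this]
    exact (memΛ_B hΛ hS _).diff ((memΛ_B hΛ hS _).inter (hΛ.contains_borel _ measurableSet_Ici))

lemma measurable_gn (hΛ : IsMeyer mΩ Λ) {S : Ω → ℝ≥0∞} (hS : IsStoppingTimeM Λ S)
    {f : Ω × ℝ≥0 → ℝ} (hf : Measurable[Λ] f) (n : ℕ) :
    Measurable[Λ] (fun p : Ω × ℝ≥0 =>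
      if S p.1 ≠ ∞ ∧ cval n (knat S n p.1) ≤ p.2 then f (p.1, cval n (knat S n p.1))
      else f p) := by
  set g : Ω × ℝ≥0 → ℝ := fun p =>
      if S p.1 ≠ ∞ ∧ cval n (knat S n p.1) ≤ p.2 then f (p.1, cval n (knat S n p.1))
      else f p with hg
  set h : ℕ → Ω × ℝ≥0 → ℝ := fun m p =>
      (∑ k ∈ Finset.range (m+1),
        (Epiece S n k).indicator (fun q => f (q.1, min q.2 (cval n k))) p)
      + ((⋃ k, ⋃ (_ : k ∈ Finset.range (m+1)), Epiece S n k)ᶜ).indicator f p with hh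
  have hmeas : ∀ m, Measurable[Λ] (h m) := by
    intro m
    refine Measurable.add ?_ ?_
    · refine Finset.measurable_sum _ fun k _ => ?_
      exact (hΛ.stop_stable f hf (cval n k)).indicator (measurableSet_Epiece hΛ hS n k)
    · refine hf.indicator (MeasurableSet.compl ?_)
      exact MeasurableSet.iUnion fun k => MeasurableSet.iUnion fun _ =>
        measurableSet_Epiece hΛ hS n k
  have hmem : ∀ p : Ω × ℝ≥0, ∀ k, p ∈ Epiece S n k ↔
      (S p.1 ≠ ∞ ∧ knat S n p.1 = k ∧ cval n k ≤ p.2) := fun p k => Iff.rfl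
  have htend : Tendsto h atTop (𝓝 g) := by
    rw [tendsto_pi_nhds]
    intro p
    by_cases hp : S p.1 ≠ ∞ ∧ cval n (knat S n p.1) ≤ p.2
    · set k₀ := knat S n p.1 with hk₀
      have hpmem : p ∈ Epiece S n k₀ := ⟨hp.1, rfl, hp.2⟩
      refine tendsto_atTop_of_eventually_const (i₀ := k₀) fun m hm => ?_
      rw [hh]
      have hsum : (∑ k ∈ Finset.range (m+1),
          (Epiece S n k).indicator (fun q => f (q.1, min q.2 (cval n k))) p)
          = f (p.1, cval n k₀) := by
        rw [Finset.sum_eq_single_of_mem k₀ (Finset.mem_range.2 (by omega))]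
        · rw [Set.indicator_of_mem hpmem, min_eq_right hp.2]
        · intro k _ hk
          refine Set.indicator_of_notMem (fun hmemk => hk ?_) _
          exact (hmem p k).1 hmemk |>.2.1 ▸ rfl
      have hcompl : ((⋃ k, ⋃ (_ : k ∈ Finset.range (m+1)), Epiece S n k)ᶜ).indicator f p = 0 := by
        refine Set.indicator_of_notMem ?_ _
        simp only [Set.mem_compl_iff, not_not, Set.mem_iUnion]
        exact ⟨k₀, Finset.mem_range.2 (by omega), hpmem⟩
      simp only [hsum, hcompl, add_zero, hg]
      rw [if_pos hp]
    · refine tendsto_atTop_of_eventually_const (i₀ := 0) fun m _ => ?_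
      rw [hh]
      have hnot : ∀ k, p ∉ Epiece S n k := by
        intro k hk
        obtain ⟨h1, h2, h3⟩ := (hmem p k).1 hk
        exact hp ⟨h1, h2 ▸ h3⟩
      have hsum : (∑ k ∈ Finset.range (m+1),
          (Epiece S n k).indicator (fun q => f (q.1, min q.2 (cval n k))) p) = 0 :=
        Finset.sum_eq_zero fun k _ => Set.indicator_of_notMem (hnot k) _
      have hcompl : ((⋃ k, ⋃ (_ : k ∈ Finset.range (m+1)), Epiece S n k)ᶜ).indicator f p
          = f p := by
        refine Set.indicator_of_mem ?_ _
        simp only [Set.mem_compl_iff, Set.mem_iUnion, not_exists]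
        exact fun k _ => hnot k
      simp only [hsum, hcompl, zero_add, hg]
      rw [if_neg hp]
  exact measurable_of_tendsto_metrizable' atTop hmeas htend

lemma measurable_stoppedF_cadlag (hΛ : IsMeyer mΩ Λ) {S : Ω → ℝ≥0∞}
    (hS : IsStoppingTimeM Λ S) {f : Ω × ℝ≥0 → ℝ} (hf : Measurable[Λ] f)
    (hcad : ∀ ω, IsCadlag fun t => f (ω, t)) :
    Measurable[Λ] (stoppedF f S) := by
  refine measurable_of_tendsto_metrizable' atTop (f := fun n p =>
      if S p.1 ≠ ∞ ∧ cval n (knat S n p.1) ≤ p.2 then f (p.1, cval n (knat S n p.1))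
      else f p) (fun n => measurable_gn hΛ hS hf n) ?_
  rw [tendsto_pi_nhds]
  intro p
  by_cases hfin : S p.1 = ∞
  · have hcond : ∀ n, ¬(S p.1 ≠ ∞ ∧ cval n (knat S n p.1) ≤ p.2) := fun n h => h.1 hfin
    have hst : stoppedF f S p = f p := by
      rw [stoppedF, if_neg]
      rw [hfin]
      simp
    refine tendsto_atTop_of_eventually_const (i₀ := 0) fun n _ => ?_
    rw [if_neg (hcond n), hst]
  · by_cases hle : S p.1 ≤ (p.2:ℝ≥0∞)
    · set x := (S p.1).toNNReal with hx
      have hxt : x ≤ p.2 := by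
        rwa [← ENNReal.coe_toNNReal hfin, ENNReal.coe_le_coe] at hle
      set c : ℕ → ℝ≥0 := fun n => cval n (knat S n p.1) with hc
      have hc1 : ∀ n, x ≤ c n := by
        intro n
        have := self_le_cval_knat hfin n
        rwa [← ENNReal.coe_toNNReal hfin, ENNReal.coe_le_coe] at this
      have hc2 : ∀ n, c n ≤ x + ((2:ℝ≥0) ^ n)⁻¹ := fun n => cval_knat_le hfin n
      set u : ℕ → ℝ≥0 := fun n => if c n ≤ p.2 then c n else p.2 with hu
      have hval : ∀ n, (if S p.1 ≠ ∞ ∧ cval n (knat S n p.1) ≤ p.2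
          then f (p.1, cval n (knat S n p.1)) else f p) = f (p.1, u n) := by
        intro n
        by_cases hcn : c n ≤ p.2
        · rw [if_pos ⟨hfin, hcn⟩, hu]
          simp only [if_pos hcn]
          rfl
        · rw [if_neg (fun hcon => hcn hcon.2), hu]
          simp only [if_neg hcn]
      have hu_ge : ∀ n, x ≤ u n := by
        intro n; rw [hu]
        by_cases hcn : c n ≤ p.2
        · simpa [hcn] using hc1 n
        · simpa [hcn] using hxt
      have hu_le : ∀ n, u n ≤ x + ((2:ℝ≥0) ^ n)⁻¹ := by
        intro n; rw [hu]
        by_cases hcn : c n ≤ p.2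
        · simpa [hcn] using hc2 n
        · simp only [if_neg hcn]
          exact (not_le.1 hcn).le.trans (hc2 n)
      have hpow : Tendsto (fun n : ℕ => ((2:ℝ≥0) ^ n)⁻¹) atTop (𝓝 0) := by
        have : ∀ n : ℕ, ((2:ℝ≥0) ^ n)⁻¹ = (2⁻¹ : ℝ≥0) ^ n := fun n => by rw [inv_pow]
        simp only [this]
        exact NNReal.tendsto_pow_atTop_nhds_zero_of_lt_one (by rw [← NNReal.coe_lt_coe]; norm_num)
      have hbound : Tendsto (fun n : ℕ => x + ((2:ℝ≥0) ^ n)⁻¹) atTop (𝓝 x) := by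
        have := Tendsto.add (tendsto_const_nhds (x := x) (f := atTop)) hpow
        simpa using this
      have hu_tend : Tendsto u atTop (𝓝[≥] x) := by
        rw [tendsto_nhdsWithin_iff]
        constructor
        · exact tendsto_of_tendsto_of_tendsto_of_le_of_le tendsto_const_nhds hbound hu_ge hu_le
        · exact Filter.Eventually.of_forall fun n => hu_ge n
      have hcadx := (hcad p.1).1 x
      have hfinal := hcadx.comp hu_tend
      have hst : stoppedF f S p = f (p.1, x) := by rw [stoppedF, if_pos hle]
      rw [hst]
      refine Tendsto.congr (fun n => (hval n).symm) hfinal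
    · have hcond : ∀ n, ¬(S p.1 ≠ ∞ ∧ cval n (knat S n p.1) ≤ p.2) := by
        intro n ⟨h1, h2⟩
        exact hle ((self_le_cval_knat hfin n).trans (by exact_mod_cast h2))
      have hst : stoppedF f S p = f p := by rw [stoppedF, if_neg hle]
      refine tendsto_atTop_of_eventually_const (i₀ := 0) fun n _ => ?_
      rw [if_neg (hcond n), hst]

/-- **Key lemma**: a `Λ`-measurable process stopped at a `Λ`-stopping time is
`Λ`-measurable. -/
lemma measurable_stoppedF (hΛ : IsMeyer mΩ Λ) {S : Ω → ℝ≥0∞}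
    (hS : IsStoppingTimeM Λ S) {W : Ω × ℝ≥0 → ℝ} (hW : Measurable[Λ] W) :
    Measurable[Λ] (stoppedF W S) := by
  obtain ⟨C, hC1, hC2⟩ := hΛ.gen_cadlag
  set φ : Ω × ℝ≥0 → Ω × ℝ≥0 := fun p =>
    if S p.1 ≤ (p.2:ℝ≥0∞) then (p.1, (S p.1).toNNReal) else p with hφdef
  have hφ : @Measurable (Ω × ℝ≥0) (Ω × ℝ≥0) Λ (genBy C) φ := by
    refine measurable_genBy_of fun f hf => ?_
    have hfm : Measurable[Λ] f := by rw [hC2]; exact measurable_genBy_self hf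
    have : f ∘ φ = stoppedF f S := by
      funext p
      simp only [Function.comp_apply, hφdef, stoppedF]
      by_cases h : S p.1 ≤ (p.2:ℝ≥0∞)
      · rw [if_pos h, if_pos h]
      · rw [if_neg h, if_neg h]
    rw [this]
    exact measurable_stoppedF_cadlag hΛ hS hfm (hC1 f hf)
  have : stoppedF W S = W ∘ φ := by
    funext p
    simp only [Function.comp_apply, hφdef, stoppedF]
    by_cases h : S p.1 ≤ (p.2:ℝ≥0∞)
    · rw [if_pos h, if_pos h]
    · rw [if_neg h, if_neg h]
  rw [this]
  have hW' : Measurable[genBy C] W := hC2 ▸ hW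
  exact hW'.comp hφ

/-! ### Consequences of the key lemma -/

lemma measurable_sigmaAt_self {V : Ω × ℝ≥0 → ℝ} (hV : Measurable[Λ] V) (t : ℝ≥0) :
    Measurable[sigmaAt Λ t] (fun ω => V (ω, t)) :=
  measurable_genBy_self ⟨V, hV, rfl⟩

lemma indicator_graph_val {Ub : Ω → ℝ≥0∞} (p : Ω × ℝ≥0) :
    Set.indicator {q : Ω × ℝ≥0 | Ub q.1 ≤ (q.2:ℝ≥0∞)} (1 : Ω × ℝ≥0 → ℝ) p
      = if Ub p.1 ≤ (p.2:ℝ≥0∞) then 1 else 0 := by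
  rw [Set.indicator_apply]; simp only [Set.mem_setOf_eq, Pi.one_apply]

lemma measurableSet_le_sigmaInf (hΛ : IsMeyer mΩ Λ) {Ub : Ω → ℝ≥0∞}
    (hUb : IsStoppingTimeM Λ Ub) (t : ℝ≥0) :
    MeasurableSet[sigmaInf Λ] {ω | Ub ω ≤ (t:ℝ≥0∞)} := by
  set I : Ω × ℝ≥0 → ℝ := Set.indicator {q : Ω × ℝ≥0 | Ub q.1 ≤ (q.2:ℝ≥0∞)} 1 with hI
  have hIm : Measurable[Λ] I := measurable_one.indicator hUb
  have h1 : Measurable[sigmaInf Λ] (fun ω => I (ω, t)) :=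
    (measurable_sigmaAt_self hIm t).mono (le_iSup _ t) le_rfl
  have : {ω | Ub ω ≤ (t:ℝ≥0∞)} = (fun ω => I (ω, t)) ⁻¹' {1} := by
    ext ω
    simp only [Set.mem_setOf_eq, Set.mem_preimage, Set.mem_singleton_iff, hI,
      indicator_graph_val (p := (ω, t))]
    constructor
    · intro h; rw [if_pos h]
    · intro h; by_contra hc; rw [if_neg hc] at h; exact one_ne_zero h.symm
  rw [this]
  exact h1 (measurableSet_singleton 1)

lemma measurable_evalAt_sigmaInf (hΛ : IsMeyer mΩ Λ) {W : Ω × ℝ≥0∞ → ℝ}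
    (hW : MeasurableProcessE Λ W) {Ub : Ω → ℝ≥0∞} (hUb : IsStoppingTimeM Λ Ub) :
    Measurable[sigmaInf Λ] (EvalAt W Ub) := by
  set Wr : Ω × ℝ≥0 → ℝ := fun p => W (p.1, (p.2:ℝ≥0∞)) with hWr
  have hst : Measurable[Λ] (stoppedF Wr Ub) := measurable_stoppedF hΛ hUb hW.1
  have hGm : ∀ n : ℕ, Measurable[sigmaInf Λ] (fun ω =>
      if Ub ω ≤ ((n:ℝ≥0):ℝ≥0∞) then stoppedF Wr Ub (ω, (n:ℝ≥0)) else W (ω, ∞)) :=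
    fun n => Measurable.ite (measurableSet_le_sigmaInf hΛ hUb _)
      ((measurable_sigmaAt_self hst (n:ℝ≥0)).mono (le_iSup _ _) le_rfl) hW.2
  refine measurable_limit_of (sigmaInf Λ) hGm ?_
  intro ω
  by_cases hfin : Ub ω = ∞
  · refine tendsto_atTop_of_eventually_const (i₀ := 0) fun n _ => ?_
    rw [if_neg (by rw [hfin]; simp)]
    simp only [EvalAt]
    rw [hfin]
  · refine tendsto_atTop_of_eventually_const (i₀ := ⌈(Ub ω).toNNReal⌉₊) fun n hn => ?_
    have hle : Ub ω ≤ ((n:ℝ≥0):ℝ≥0∞) := by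
      rw [← ENNReal.coe_toNNReal hfin, ENNReal.coe_le_coe]
      calc (Ub ω).toNNReal ≤ (⌈(Ub ω).toNNReal⌉₊ : ℝ≥0) := Nat.le_ceil _
      _ ≤ (n : ℝ≥0) := by exact_mod_cast hn
    rw [if_pos hle, stoppedF, if_pos hle, hWr]
    simp only [EvalAt]
    rw [ENNReal.coe_toNNReal hfin]

lemma processE_stopped (hΛ : IsMeyer mΩ Λ) {W : Ω × ℝ≥0∞ → ℝ}
    (hW : MeasurableProcessE Λ W) {Ub : Ω → ℝ≥0∞} (hUb : IsStoppingTimeM Λ Ub) :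
    MeasurableProcessE Λ (fun q : Ω × ℝ≥0∞ => W (q.1, min q.2 (Ub q.1))) := by
  set Wr : Ω × ℝ≥0 → ℝ := fun p => W (p.1, (p.2:ℝ≥0∞)) with hWr
  constructor
  · have : (fun p : Ω × ℝ≥0 => W (p.1, min (p.2:ℝ≥0∞) (Ub p.1))) = stoppedF Wr Ub := by
      funext p
      rw [stoppedF]
      by_cases h : Ub p.1 ≤ (p.2:ℝ≥0∞)
      · rw [if_pos h, min_eq_right h, hWr]
        simp only
        rw [ENNReal.coe_toNNReal (ne_top_of_le_ne_top ENNReal.coe_ne_top h)]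
      · rw [if_neg h, min_eq_left (not_le.1 h).le]
    rw [this]
    exact measurable_stoppedF hΛ hUb hW.1
  · have : (fun ω => W (ω, min ∞ (Ub ω))) = EvalAt W Ub := by
      funext ω
      rw [min_eq_right le_top, EvalAt]
    rw [this]
    exact measurable_evalAt_sigmaInf hΛ hW hUb

lemma sigmaAtTime_min_le (hΛ : IsMeyer mΩ Λ) {S Ub : Ω → ℝ≥0∞}
    (hUb : IsStoppingTimeM Λ Ub) :
    sigmaAtTime Λ (fun ω => min (S ω) (Ub ω)) ≤ sigmaAtTime Λ S := by
  refine genBy_le fun f hf => ?_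
  obtain ⟨Z, hZ, rfl⟩ := hf
  exact measurable_evalAt_sigmaAtTime (processE_stopped hΛ hZ hUb) S

lemma measurableSet_Ub_le_S {S Ub : Ω → ℝ≥0∞} (hUb : IsStoppingTimeM Λ Ub) :
    MeasurableSet[sigmaAtTime Λ S] {ω | Ub ω ≤ S ω} := by
  set I : Ω × ℝ≥0 → ℝ := Set.indicator {q : Ω × ℝ≥0 | Ub q.1 ≤ (q.2:ℝ≥0∞)} 1 with hI
  set Y : Ω × ℝ≥0∞ → ℝ := fun q => if q.2 = ∞ then 1 else I (q.1, q.2.toNNReal) with hY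
  have hYE : MeasurableProcessE Λ Y := by
    constructor
    · have : (fun p : Ω × ℝ≥0 => Y (p.1, (p.2:ℝ≥0∞))) = I := by
        funext p
        rw [hY]
        simp only [ENNReal.coe_ne_top, if_false, ENNReal.toNNReal_coe]
      rw [this]
      exact measurable_one.indicator hUb
    · have : (fun ω => Y (ω, ∞)) = fun _ => (1:ℝ) := by
        funext ω; rw [hY]; simp
      rw [this]
      exact measurable_const
  have hval : ∀ ω, EvalAt Y S ω = if Ub ω ≤ S ω then 1 else 0 := by
    intro ω
    simp only [EvalAt, hY, hI]
    by_cases h : S ω = ∞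
    · rw [if_pos h, if_pos (h ▸ le_top)]
    · rw [if_neg h, indicator_graph_val (p := (ω, (S ω).toNNReal)), ENNReal.coe_toNNReal h]
  have : {ω | Ub ω ≤ S ω} = EvalAt Y S ⁻¹' {1} := by
    ext ω
    simp only [Set.mem_setOf_eq, Set.mem_preimage, Set.mem_singleton_iff, hval ω]
    constructor
    · intro h; rw [if_pos h]
    · intro h; by_contra hc; rw [if_neg hc] at h; exact one_ne_zero h.symm
  rw [this]
  exact measurable_evalAt_sigmaAtTime hYE S (measurableSet_singleton 1)

/-! ### Probabilistic utilities -/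

variable {P : Measure Ω} [IsProbabilityMeasure P]

lemma integrable_of_classD {ZS : (Ω → ℝ≥0∞) → Ω → ℝ} (hD : ClassDSys P Λ ZS)
    {S : Ω → ℝ≥0∞} (hS : IsStoppingTimeM Λ S) : Integrable (ZS S) P := by
  obtain ⟨hmeas, _, C, hC⟩ := hD
  refine memLp_one_iff_integrable.1 ⟨hmeas ⟨S, hS⟩, ?_⟩
  exact lt_of_le_of_lt (hC ⟨S, hS⟩) ENNReal.coe_lt_top

lemma ae_eq_of_ae_le_of_integral_le {f g : Ω → ℝ} (hfg : f ≤ᵐ[P] g)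
    (hf : Integrable f P) (hg : Integrable g P)
    (hint : ∫ ω, g ω ∂P ≤ ∫ ω, f ω ∂P) : f =ᵐ[P] g := by
  have h0 : 0 ≤ᵐ[P] (g - f) := by
    filter_upwards [hfg] with ω h
    simp only [Pi.zero_apply, Pi.sub_apply, sub_nonneg]
    exact h
  have hgi : Integrable (g - f) P := hg.sub hf
  have hzero : ∫ ω, (g - f) ω ∂P = 0 := by
    have h1 : ∫ ω, (g - f) ω ∂P = ∫ ω, g ω ∂P - ∫ ω, f ω ∂P := by
      simp only [Pi.sub_apply]
      exact integral_sub hg hf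
    have h2 : (0:ℝ) ≤ ∫ ω, (g - f) ω ∂P := integral_nonneg_of_ae h0
    linarith
  have := (integral_eq_zero_iff_of_nonneg_ae h0 hgi).1 hzero
  filter_upwards [this] with ω h
  have h' : g ω - f ω = 0 := h
  linarith

lemma condexp_self_of_measurable {m : MeasurableSpace Ω} (hm : m ≤ mΩ) {f : Ω → ℝ}
    (hfm : Measurable[m] f) (hfi : Integrable f P) : P[f|m] =ᵐ[P] f := by
  rw [condExp_of_stronglyMeasurable hm hfm.stronglyMeasurable hfi]

lemma integral_condExp_eq {m : MeasurableSpace Ω} (hm : m ≤ mΩ) {f : Ω → ℝ} :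
    ∫ ω, (P[f|m]) ω ∂P = ∫ ω, f ω ∂P :=
  integral_condExp hm

lemma integral_evalAt_le_of_super {Zb : Ω × ℝ≥0∞ → ℝ} (hΛ : IsMeyer mΩ Λ)
    (hsup : IsSupermartingaleM P Λ Zb) {S T : Ω → ℝ≥0∞}
    (hS : IsStoppingTimeM Λ S) (hT : IsStoppingTimeM Λ T) (hST : S ≤ T) :
    ∫ ω, EvalAt Zb T ω ∂P ≤ ∫ ω, EvalAt Zb S ω ∂P := by
  have h := hsup.2.2 S T hS hT hST
  have hm := sigmaAtTime_le hΛ hS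
  calc ∫ ω, EvalAt Zb T ω ∂P = ∫ ω, (P[EvalAt Zb T|sigmaAtTime Λ S]) ω ∂P :=
        (integral_condExp hm).symm
  _ ≤ ∫ ω, EvalAt Zb S ω ∂P := integral_mono_ae integrable_condExp (hsup.2.1 S hS) h

/-! ### Combination stopping times -/

lemma measurable_fst_F0 (hΛ : IsMeyer mΩ Λ) :
    @Measurable (Ω × ℝ≥0) Ω Λ (sigmaAtTime Λ (fun _ => (0:ℝ≥0∞))) Prod.fst := by
  refine measurable_genBy_of fun f hf => ?_
  obtain ⟨Z, hZ, rfl⟩ := hf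
  have h := hΛ.stop_stable _ hZ.1 0
  have h' : Measurable[Λ] (fun p : Ω × ℝ≥0 => Z (p.1, ((min p.2 0 : ℝ≥0) : ℝ≥0∞))) := h
  simp only [min_zero, ENNReal.coe_zero] at h'
  exact h'

lemma isST_piecewise_F0 (hΛ : IsMeyer mΩ Λ) {T1 T2 : Ω → ℝ≥0∞}
    (hT1 : IsStoppingTimeM Λ T1) (hT2 : IsStoppingTimeM Λ T2) {A : Set Ω}
    (hA : MeasurableSet[sigmaAtTime Λ (fun _ => (0:ℝ≥0∞))] A) :
    IsStoppingTimeM Λ (fun ω => if ω ∈ A then T1 ω else T2 ω) := by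
  have hfst := measurable_fst_F0 hΛ
  have hset : {p : Ω × ℝ≥0 | (if p.1 ∈ A then T1 p.1 else T2 p.1) ≤ (p.2:ℝ≥0∞)}
      = ((Prod.fst ⁻¹' A) ∩ {p : Ω × ℝ≥0 | T1 p.1 ≤ (p.2:ℝ≥0∞)})
        ∪ ((Prod.fst ⁻¹' A)ᶜ ∩ {p : Ω × ℝ≥0 | T2 p.1 ≤ (p.2:ℝ≥0∞)}) := by
    ext p
    simp only [Set.mem_setOf_eq, Set.mem_union, Set.mem_inter_iff, Set.mem_preimage,
      Set.mem_compl_iff]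
    by_cases h : p.1 ∈ A
    · rw [if_pos h]; tauto
    · rw [if_neg h]; tauto
  unfold IsStoppingTimeM
  rw [hset]
  exact ((hfst hA).inter hT1).union (((hfst hA).compl).inter hT2)

lemma isST_That (hΛ : IsMeyer mΩ Λ) {S T Ub : Ω → ℝ≥0∞}
    (hS : IsStoppingTimeM Λ S) (hT : IsStoppingTimeM Λ T) (hUb : IsStoppingTimeM Λ Ub)
    (hST : S ≤ T) :
    IsStoppingTimeM Λ (fun ω => if Ub ω ≤ S ω then S ω else min (T ω) (Ub ω)) := by
  set I : Ω × ℝ≥0 → ℝ := Set.indicator {q : Ω × ℝ≥0 | Ub q.1 ≤ (q.2:ℝ≥0∞)} 1 with hI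
  have hIm : Measurable[Λ] I := measurable_one.indicator hUb
  set IS : Ω × ℝ≥0 → ℝ := stoppedF I S with hISdef
  have hISm : Measurable[Λ] IS := measurable_stoppedF hΛ hS hIm
  have hISval : ∀ p : Ω × ℝ≥0, IS p = if S p.1 ≤ (p.2:ℝ≥0∞)
      then (if Ub p.1 ≤ S p.1 then (1:ℝ) else 0)
      else (if Ub p.1 ≤ (p.2:ℝ≥0∞) then 1 else 0) := by
    intro p
    rw [hISdef, stoppedF]
    by_cases h : S p.1 ≤ (p.2:ℝ≥0∞)
    · rw [if_pos h, if_pos h, hI, indicator_graph_val (p := (p.1, (S p.1).toNNReal)),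
        ENNReal.coe_toNNReal (ne_top_of_le_ne_top ENNReal.coe_ne_top h)]
    · rw [if_neg h, if_neg h, hI, indicator_graph_val]
  have hset : {p : Ω × ℝ≥0 | (if Ub p.1 ≤ S p.1 then S p.1 else min (T p.1) (Ub p.1))
        ≤ (p.2:ℝ≥0∞)}
      = ({p : Ω × ℝ≥0 | S p.1 ≤ (p.2:ℝ≥0∞)} ∩ IS ⁻¹' {1})
        ∪ ({p : Ω × ℝ≥0 | min (T p.1) (Ub p.1) ≤ (p.2:ℝ≥0∞)} ∩ (IS ⁻¹' {1})ᶜ) := by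
    ext p
    simp only [Set.mem_setOf_eq, Set.mem_union, Set.mem_inter_iff, Set.mem_preimage,
      Set.mem_singleton_iff, Set.mem_compl_iff, hISval p]
    constructor
    · intro hmem
      by_cases hA : Ub p.1 ≤ S p.1
      · rw [if_pos hA] at hmem
        left
        exact ⟨hmem, by rw [if_pos hmem, if_pos hA]⟩
      · rw [if_neg hA] at hmem
        right
        refine ⟨hmem, ?_⟩
        by_cases hSp : S p.1 ≤ (p.2:ℝ≥0∞)
        · rw [if_pos hSp, if_neg hA]
          exact fun h => one_ne_zero h.symm
        · rw [if_neg hSp]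
          have hUbp : ¬ Ub p.1 ≤ (p.2:ℝ≥0∞) := by
            intro hc
            exact hSp ((not_le.1 hA).le.trans hc)
          rw [if_neg hUbp]
          exact fun h => one_ne_zero h.symm
    · rintro (⟨h1, h2⟩ | ⟨h1, h2⟩)
      · rw [if_pos h1] at h2
        have hA : Ub p.1 ≤ S p.1 := by
          by_contra hc
          rw [if_neg hc] at h2
          exact one_ne_zero h2.symm
        rw [if_pos hA]
        exact h1
      · by_cases hA : Ub p.1 ≤ S p.1
        · rw [if_pos hA]
          by_contra hc
          rw [if_neg hc] at h2
          rcases min_le_iff.1 h1 with hc1 | hc2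
          · exact hc (le_trans (hST p.1) hc1)
          · exact h2 (by rw [if_pos hc2])
        · rw [if_neg hA]
          exact h1
  unfold IsStoppingTimeM
  rw [hset]
  exact (hS.inter (hISm (measurableSet_singleton 1))).union
    ((isST_min hT hUb).inter ((hISm (measurableSet_singleton 1)).compl))

theorem statement9' (P : Measure Ω) [IsProbabilityMeasure P]
    (Λ : MeasurableSpace (Ω × ℝ≥0)) (hΛ : IsMeyer mΩ Λ)
    (ZS : (Ω → ℝ≥0∞) → Ω → ℝ) (hsys : IsSystemM P Λ ZS)
    (hD : ClassDSys P Λ ZS)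
    (Zb : Ω × ℝ≥0∞ → ℝ) (hZb : IsSnellSys P Λ ZS Zb)
    (Ub : Ω → ℝ≥0∞) (hUb : IsStoppingTimeM Λ Ub) :
    (∀ S, IsStoppingTimeM Λ S → ∫ ω, ZS S ω ∂P ≤ ∫ ω, ZS Ub ω ∂P) ↔
      (ZS Ub =ᵐ[P] EvalAt Zb Ub ∧
        IsMartingaleM P Λ fun p => Zb (p.1, min p.2 (Ub p.1))) := by
  obtain ⟨hsup, hsnell⟩ := hZb
  have hXint : ∀ {R : Ω → ℝ≥0∞}, IsStoppingTimeM Λ R → Integrable (EvalAt Zb R) P :=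
    fun {R} hR => hsup.2.1 R hR
  have hZSint : ∀ {R : Ω → ℝ≥0∞}, IsStoppingTimeM Λ R → Integrable (ZS R) P :=
    fun {R} hR => integrable_of_classD hD hR
  have hF0le : sigmaAtTime Λ (fun _ : Ω => (0:ℝ≥0∞)) ≤ mΩ := sigmaAtTime_le hΛ isST_zero
  set c : ℝ := ∫ ω, ZS Ub ω ∂P with hc
  -- ZS Ub ≤ X_Ub a.e.
  have hZSleX : ZS Ub ≤ᵐ[P] EvalAt Zb Ub := by
    have h1 := (hsnell Ub hUb).1 Ub hUb le_rfl
    have h2 : P[ZS Ub|sigmaAtTime Λ Ub] =ᵐ[P] ZS Ub :=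
      condexp_self_of_measurable (sigmaAtTime_le hΛ hUb) (hsys.2 Ub hUb) (hZSint hUb)
    filter_upwards [h1, h2] with ω ha hb
    rw [← hb]; exact ha
  constructor
  · -- forward direction
    intro hmax
    -- Step (c1): conditional expectations are dominated by that of Ub
    have hc1 : ∀ T, IsStoppingTimeM Λ T →
        P[ZS T|(sigmaAtTime Λ (fun _ : Ω => (0:ℝ≥0∞)))] ≤ᵐ[P] P[ZS Ub|(sigmaAtTime Λ (fun _ : Ω => (0:ℝ≥0∞)))] := by
      intro T hT
      set gT : Ω → ℝ := P[ZS T|(sigmaAtTime Λ (fun _ : Ω => (0:ℝ≥0∞)))] with hgT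
      set gU : Ω → ℝ := P[ZS Ub|(sigmaAtTime Λ (fun _ : Ω => (0:ℝ≥0∞)))] with hgU
      set A : Set Ω := {ω | gU ω < gT ω} with hAdef
      have hA : MeasurableSet[(sigmaAtTime Λ (fun _ : Ω => (0:ℝ≥0∞)))] A :=
        measurableSet_lt stronglyMeasurable_condExp.measurable
          stronglyMeasurable_condExp.measurable
      have hAm : MeasurableSet A := hF0le _ hA
      set T' : Ω → ℝ≥0∞ := fun ω => if ω ∈ A then T ω else Ub ω with hT'def
      have hT' : IsStoppingTimeM Λ T' := isST_piecewise_F0 hΛ hT hUb hA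
      have hT'eq : ZS T' =ᵐ[P] A.indicator (ZS T) + Aᶜ.indicator (ZS Ub) := by
        have e1 := hsys.1 T' T hT' hT
        have e2 := hsys.1 T' Ub hT' hUb
        filter_upwards [e1, e2] with ω h1 h2
        by_cases hω : ω ∈ A
        · have hT'ω : T' ω = T ω := if_pos hω
          rw [h1 hT'ω, Pi.add_apply, Set.indicator_of_mem hω,
            Set.indicator_of_notMem (Set.notMem_compl_iff.2 hω), add_zero]
        · have hT'ω : T' ω = Ub ω := if_neg hω
          rw [h2 hT'ω, Pi.add_apply, Set.indicator_of_notMem hω,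
            Set.indicator_of_mem (Set.mem_compl hω), zero_add]
      set M : Ω → ℝ := fun ω => max (gT ω) (gU ω) with hM
      have hcondT' : P[ZS T'|(sigmaAtTime Λ (fun _ : Ω => (0:ℝ≥0∞)))] =ᵐ[P] M := by
        calc P[ZS T'|(sigmaAtTime Λ (fun _ : Ω => (0:ℝ≥0∞)))]
            =ᵐ[P] P[A.indicator (ZS T) + Aᶜ.indicator (ZS Ub)|(sigmaAtTime Λ (fun _ : Ω => (0:ℝ≥0∞)))] := condExp_congr_ae hT'eq
          _ =ᵐ[P] P[A.indicator (ZS T)|(sigmaAtTime Λ (fun _ : Ω => (0:ℝ≥0∞)))] + P[Aᶜ.indicator (ZS Ub)|(sigmaAtTime Λ (fun _ : Ω => (0:ℝ≥0∞)))] :=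
              condExp_add ((hZSint hT).indicator hAm) ((hZSint hUb).indicator hAm.compl) _
          _ =ᵐ[P] A.indicator gT + Aᶜ.indicator gU := by
              have i1 := condExp_indicator (m := (sigmaAtTime Λ (fun _ : Ω => (0:ℝ≥0∞)))) (μ := P) (hZSint hT) hA
              have i2 := condExp_indicator (m := (sigmaAtTime Λ (fun _ : Ω => (0:ℝ≥0∞)))) (μ := P) (hZSint hUb) hA.compl
              filter_upwards [i1, i2] with ω e1 e2
              simp only [Pi.add_apply]
              rw [e1, e2]
          _ = M := by
              funext ω
              simp only [Pi.add_apply, hM]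
              by_cases hω : ω ∈ A
              · rw [Set.indicator_of_mem hω, Set.indicator_of_notMem (by simp [hω]),
                  add_zero, max_eq_left (le_of_lt hω)]
              · rw [Set.indicator_of_notMem hω, Set.indicator_of_mem (Set.mem_compl hω),
                  zero_add, max_eq_right (not_lt.1 hω)]
      have hMint : Integrable M P := (integrable_condExp).congr hcondT'
      have hintM : ∫ ω, M ω ∂P ≤ c := by
        have h1 : ∫ ω, M ω ∂P = ∫ ω, ZS T' ω ∂P := by
          rw [← integral_congr_ae hcondT']
          exact integral_condExp_eq hF0le
        rw [h1]; exact hmax T' hT'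
      have hintU : ∫ ω, gU ω ∂P = c := integral_condExp_eq hF0le
      have hUeqM : gU =ᵐ[P] M := by
        refine ae_eq_of_ae_le_of_integral_le ?_ integrable_condExp hMint ?_
        · exact Filter.Eventually.of_forall fun ω => le_max_right _ _
        · rw [hintU]; exact hintM
      filter_upwards [hUeqM] with ω h
      calc gT ω ≤ M ω := le_max_left _ _
        _ = gU ω := h.symm
    -- Step (c2): ∫ X_0 ≤ c, hence ∫ X_Ub = ∫ X_0 = c
    have hX0le : ∫ ω, EvalAt Zb (fun _ => (0:ℝ≥0∞)) ω ∂P ≤ c := by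
      have hmin := (hsnell (fun _ => (0:ℝ≥0∞)) isST_zero).2 (P[ZS Ub|(sigmaAtTime Λ (fun _ : Ω => (0:ℝ≥0∞)))])
        (fun T hT _ => hc1 T hT)
      have : ∫ ω, EvalAt Zb (fun _ => (0:ℝ≥0∞)) ω ∂P ≤ ∫ ω, (P[ZS Ub|(sigmaAtTime Λ (fun _ : Ω => (0:ℝ≥0∞)))]) ω ∂P :=
        integral_mono_ae (hXint isST_zero) integrable_condExp hmin
      calc ∫ ω, EvalAt Zb (fun _ => (0:ℝ≥0∞)) ω ∂P ≤ ∫ ω, (P[ZS Ub|(sigmaAtTime Λ (fun _ : Ω => (0:ℝ≥0∞)))]) ω ∂P := this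
        _ = c := integral_condExp_eq hF0le
    have hcleXUb : c ≤ ∫ ω, EvalAt Zb Ub ω ∂P :=
      integral_mono_ae (hZSint hUb) (hXint hUb) hZSleX
    have hXUbleX0 : ∫ ω, EvalAt Zb Ub ω ∂P ≤ ∫ ω, EvalAt Zb (fun _ => (0:ℝ≥0∞)) ω ∂P :=
      integral_evalAt_le_of_super hΛ hsup isST_zero hUb (fun ω => zero_le)
    have hXUb : ∫ ω, EvalAt Zb Ub ω ∂P = c := le_antisymm (hXUbleX0.trans hX0le) hcleXUb
    have hX0 : ∫ ω, EvalAt Zb (fun _ => (0:ℝ≥0∞)) ω ∂P = c :=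
      le_antisymm hX0le (hcleXUb.trans hXUbleX0)
    -- (i)
    have hi : ZS Ub =ᵐ[P] EvalAt Zb Ub := by
      refine ae_eq_of_ae_le_of_integral_le hZSleX (hZSint hUb) (hXint hUb) ?_
      rw [hXUb]
    -- all stopped expectations equal c
    have hstopint : ∀ R, IsStoppingTimeM Λ R →
        ∫ ω, EvalAt Zb (fun ω => min (R ω) (Ub ω)) ω ∂P = c := by
      intro R hR
      have h1 : ∫ ω, EvalAt Zb Ub ω ∂P ≤ ∫ ω, EvalAt Zb (fun ω => min (R ω) (Ub ω)) ω ∂P :=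
        integral_evalAt_le_of_super hΛ hsup (isST_min hR hUb) hUb (fun ω => min_le_right _ _)
      have h2 : ∫ ω, EvalAt Zb (fun ω => min (R ω) (Ub ω)) ω ∂P
          ≤ ∫ ω, EvalAt Zb (fun _ => (0:ℝ≥0∞)) ω ∂P :=
        integral_evalAt_le_of_super hΛ hsup isST_zero (isST_min hR hUb) (fun ω => zero_le)
      rw [hXUb] at h1
      rw [hX0] at h2
      exact le_antisymm h2 h1
    refine ⟨hi, ?_⟩
    refine ⟨processE_stopped hΛ hsup.1 hUb, ?_, ?_⟩
    · intro S hS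
      exact hXint (isST_min hS hUb)
    · intro S T hS hT hST
      -- key inequality
      set A : Set Ω := {ω | Ub ω ≤ S ω} with hAdef
      have hA : MeasurableSet[sigmaAtTime Λ S] A := measurableSet_Ub_le_S hUb
      have hAm : MeasurableSet A := sigmaAtTime_le hΛ hS _ hA
      set That : Ω → ℝ≥0∞ := fun ω => if Ub ω ≤ S ω then S ω else min (T ω) (Ub ω)
        with hThatdef
      have hThat : IsStoppingTimeM Λ That := isST_That hΛ hS hT hUb hST
      have hSThat : S ≤ That := by
        intro ω
        simp only [hThatdef]
        by_cases h : Ub ω ≤ S ω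
        · rw [if_pos h]
        · rw [if_neg h]
          exact le_min (hST ω) (not_le.1 h).le
      have hsupThat := hsup.2.2 S That hS hThat hSThat
      set XSU : Ω → ℝ := EvalAt Zb (fun ω => min (S ω) (Ub ω)) with hXSU
      set XTU : Ω → ℝ := EvalAt Zb (fun ω => min (T ω) (Ub ω)) with hXTU
      set XS : Ω → ℝ := EvalAt Zb S with hXS
      have hXSUmeas : Measurable[sigmaAtTime Λ S] XSU :=
        measurable_evalAt_sigmaAtTime (processE_stopped hΛ hsup.1 hUb) S
      have hXSmeas : Measurable[sigmaAtTime Λ S] XS :=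
        measurable_evalAt_sigmaAtTime hsup.1 S
      have hdecomp : XTU = A.indicator XSU + (EvalAt Zb That - A.indicator XS) := by
        funext ω
        simp only [Pi.add_apply, Pi.sub_apply]
        by_cases hω : ω ∈ A
        · have hUbS : Ub ω ≤ S ω := hω
          rw [Set.indicator_of_mem hω, Set.indicator_of_mem hω]
          have h1 : That ω = S ω := if_pos hUbS
          have h2 : min (T ω) (Ub ω) = Ub ω := min_eq_right (hUbS.trans (hST ω))
          have h3 : min (S ω) (Ub ω) = Ub ω := min_eq_right hUbS
          simp only [hXTU, hXSU, hXS, EvalAt, h1, h2, h3]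
          ring
        · rw [Set.indicator_of_notMem hω, Set.indicator_of_notMem hω]
          have h1 : That ω = min (T ω) (Ub ω) := if_neg hω
          simp only [hXTU, EvalAt, h1]
          ring
      have hkey : P[XTU|sigmaAtTime Λ S] ≤ᵐ[P] XSU := by
        have e0 : P[XTU|sigmaAtTime Λ S]
            =ᵐ[P] P[A.indicator XSU|sigmaAtTime Λ S]
              + P[EvalAt Zb That - A.indicator XS|sigmaAtTime Λ S] := by
          rw [hdecomp]
          exact condExp_add ((hXint (isST_min hS hUb)).indicator hAm)
            ((hXint hThat).sub ((hXint hS).indicator hAm)) _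
        have e1 : P[A.indicator XSU|sigmaAtTime Λ S] =ᵐ[P] A.indicator XSU :=
          condexp_self_of_measurable (sigmaAtTime_le hΛ hS) (hXSUmeas.indicator hA)
            ((hXint (isST_min hS hUb)).indicator hAm)
        have e2 : P[EvalAt Zb That - A.indicator XS|sigmaAtTime Λ S]
            =ᵐ[P] P[EvalAt Zb That|sigmaAtTime Λ S] - P[A.indicator XS|sigmaAtTime Λ S] :=
          condExp_sub (hXint hThat) ((hXint hS).indicator hAm) _
        have e3 : P[A.indicator XS|sigmaAtTime Λ S] =ᵐ[P] A.indicator XS :=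
          condexp_self_of_measurable (sigmaAtTime_le hΛ hS) (hXSmeas.indicator hA)
            ((hXint hS).indicator hAm)
        filter_upwards [e0, e1, e2, e3, hsupThat] with ω h0 h1 h2 h3 h4
        rw [h0]
        simp only [Pi.add_apply]
        rw [h1, h2]
        simp only [Pi.sub_apply]
        rw [h3]
        by_cases hω : ω ∈ A
        · have hUbS : Ub ω ≤ S ω := hω
          rw [Set.indicator_of_mem hω, Set.indicator_of_mem hω]
          have h5 : min (S ω) (Ub ω) = Ub ω := min_eq_right hUbS
          have h6 : That ω = S ω := if_pos hUbS
          simp only [hXSU, hXS, EvalAt, h5] at *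
          have : (P[EvalAt Zb That|sigmaAtTime Λ S]) ω ≤ Zb (ω, S ω) := by
            calc (P[EvalAt Zb That|sigmaAtTime Λ S]) ω ≤ EvalAt Zb S ω := h4
            _ = Zb (ω, S ω) := rfl
          linarith
        · rw [Set.indicator_of_notMem hω, Set.indicator_of_notMem hω]
          have h5 : min (S ω) (Ub ω) = S ω := min_eq_left (not_le.1 hω).le
          have : (P[EvalAt Zb That|sigmaAtTime Λ S]) ω ≤ Zb (ω, S ω) := by
            calc (P[EvalAt Zb That|sigmaAtTime Λ S]) ω ≤ EvalAt Zb S ω := h4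
            _ = Zb (ω, S ω) := rfl
          simp only [hXSU, EvalAt, h5]
          linarith
      -- equal integrals force equality
      have heq : XSU =ᵐ[P] P[XTU|sigmaAtTime Λ S] := by
        have hint1 : ∫ ω, (P[XTU|sigmaAtTime Λ S]) ω ∂P = c := by
          rw [integral_condExp_eq (sigmaAtTime_le hΛ hS)]
          exact hstopint T hT
        have hint2 : ∫ ω, XSU ω ∂P = c := hstopint S hS
        exact (ae_eq_of_ae_le_of_integral_le hkey integrable_condExp
          (hXint (isST_min hS hUb)) (by rw [hint1, hint2])).symm
      exact heq
  · -- backward direction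
    rintro ⟨hi, hmart⟩ S hS
    have hm0 := hmart.2.2 (fun _ => (0:ℝ≥0∞)) (fun _ => (⊤:ℝ≥0∞)) isST_zero isST_top
      (fun ω => le_top)
    have hX0eq : EvalAt (fun p : Ω × ℝ≥0∞ => Zb (p.1, min p.2 (Ub p.1))) (fun _ => (0:ℝ≥0∞))
        = EvalAt Zb (fun _ => (0:ℝ≥0∞)) := by
      funext ω
      simp only [EvalAt]
      rw [min_eq_left zero_le]
    have hXtopeq : EvalAt (fun p : Ω × ℝ≥0∞ => Zb (p.1, min p.2 (Ub p.1))) (fun _ => (⊤:ℝ≥0∞))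
        = EvalAt Zb Ub := by
      funext ω
      simp only [EvalAt]
      rw [min_eq_right le_top]
    have hint0 : ∫ ω, EvalAt Zb (fun _ => (0:ℝ≥0∞)) ω ∂P = ∫ ω, EvalAt Zb Ub ω ∂P := by
      rw [← hX0eq, ← hXtopeq]
      rw [integral_congr_ae hm0]
      rw [integral_condExp_eq hF0le]
    have h1 : ∫ ω, ZS S ω ∂P ≤ ∫ ω, EvalAt Zb S ω ∂P := by
      have ha := (hsnell S hS).1 S hS le_rfl
      have hb : P[ZS S|sigmaAtTime Λ S] =ᵐ[P] ZS S :=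
        condexp_self_of_measurable (sigmaAtTime_le hΛ hS) (hsys.2 S hS) (hZSint hS)
      have : ZS S ≤ᵐ[P] EvalAt Zb S := by
        filter_upwards [ha, hb] with ω h1 h2
        rw [← h2]; exact h1
      exact integral_mono_ae (hZSint hS) (hXint hS) this
    have h2 : ∫ ω, EvalAt Zb S ω ∂P ≤ ∫ ω, EvalAt Zb (fun _ => (0:ℝ≥0∞)) ω ∂P :=
      integral_evalAt_le_of_super hΛ hsup isST_zero hS (fun ω => zero_le)
    have h3 : ∫ ω, EvalAt Zb Ub ω ∂P = ∫ ω, ZS Ub ω ∂P :=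
      (integral_congr_ae hi).symm
    calc ∫ ω, ZS S ω ∂P ≤ ∫ ω, EvalAt Zb S ω ∂P := h1
      _ ≤ ∫ ω, EvalAt Zb (fun _ => (0:ℝ≥0∞)) ω ∂P := h2
      _ = ∫ ω, EvalAt Zb Ub ω ∂P := hint0
      _ = ∫ ω, ZS Ub ω ∂P := h3
/-- **Optimality criterion.** `Ū` maximizes `E[Z(S)]` over `Λ`-stopping
times iff `Z(Ū) = Z̄_Ū` a.s. and the stopped Snell envelope is a `Λ`-martingale. -/
theorem statement9 (P : Measure Ω) [IsProbabilityMeasure P] [hPc : P.IsComplete]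
    (Λ : MeasurableSpace (Ω × ℝ≥0)) (hΛ : IsMeyer mΩ Λ) (hcomp : IsPCompleteM P Λ)
    (ZS : (Ω → ℝ≥0∞) → Ω → ℝ) (hsys : IsSystemM P Λ ZS)
    (hpos : ∀ S, IsStoppingTimeM Λ S → 0 ≤ᵐ[P] ZS S)
    (hD : ClassDSys P Λ ZS)
    (Zb : Ω × ℝ≥0∞ → ℝ) (hZb : IsSnellSys P Λ ZS Zb)
    (Ub : Ω → ℝ≥0∞) (hUb : IsStoppingTimeM Λ Ub) :
    (∀ S, IsStoppingTimeM Λ S → ∫ ω, ZS S ω ∂P ≤ ∫ ω, ZS Ub ω ∂P) ↔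
      (ZS Ub =ᵐ[P] EvalAt Zb Ub ∧
        IsMartingaleM P Λ fun p => Zb (p.1, min p.2 (Ub p.1))) := by
  exact statement9' P Λ hΛ ZS hsys hD Zb hZb Ub hUb

end Meyer
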